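/- Let Σ be a positive definite matrix partitioned by disjoint index sets. Then the matrix of least-squares regression coefficients satisfies the Cochran recursion Π_{a|b.cd} = Π_{a|b.c} − Π_{a|d.bc} Π_{d|b.c}. -/

import Mathlib

variable {n : ℕ}

/-- The submatrix (block) of `S` with rows `x` and columns `y`. -/
def blk (S : Matrix (Fin n) (Fin n) ℝ) (x y : Finset (Fin n)) : Matrix x y ℝ :=
  Matrix.of fun i j => S i j

/-- The conditional covariance block `Σ_{xy|z} = Σ_{xy} − Σ_{xz} Σ_{zz}⁻¹ Σ_{zy}`. -/
noncomputable def condCov (S : Matrix (Fin n) (Fin n) ℝ) (x y z : Finset (Fin n)) :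
    Matrix x y ℝ :=
  blk S x y - blk S x z * (blk S z z)⁻¹ * blk S z y

/-- The partial regression coefficient matrix `Π_{x|y.z} = Σ_{xy|z} Σ_{yy|z}⁻¹`. -/
noncomputable def regCoef (S : Matrix (Fin n) (Fin n) ℝ) (x y z : Finset (Fin n)) :
    Matrix x y ℝ :=
  condCov S x y z * (condCov S y y z)⁻¹

open Matrix

/-- Equivalence between a sum of disjoint finsets and their union. -/
def unionEquiv {z₁ z₂ : Finset (Fin n)} (h : Disjoint z₁ z₂) : (↥z₁ ⊕ ↥z₂) ≃ ↥(z₁ ∪ z₂) where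
  toFun := Sum.elim (fun i => ⟨i.1, Finset.mem_union_left _ i.2⟩)
    (fun i => ⟨i.1, Finset.mem_union_right _ i.2⟩)
  invFun i := if h' : (i : Fin n) ∈ z₁ then Sum.inl ⟨i, h'⟩
    else Sum.inr ⟨i, (Finset.mem_union.mp i.2).resolve_left h'⟩
  left_inv := by
    rintro (⟨i, hi⟩ | ⟨i, hi⟩)
    · simp [hi]
    · have : i ∉ z₁ := Finset.disjoint_right.mp h hi
      simp [this]
  right_inv := by
    rintro ⟨i, hi⟩
    by_cases h' : i ∈ z₁ <;> simp [h']

variable {S : Matrix (Fin n) (Fin n) ℝ}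

lemma blk_cols {z₁ z₂ : Finset (Fin n)} (h : Disjoint z₁ z₂) (x : Finset (Fin n)) :
    (blk S x (z₁ ∪ z₂)).submatrix id (unionEquiv h) = fromCols (blk S x z₁) (blk S x z₂) := by
  ext i j; cases j <;> rfl

lemma blk_rows {z₁ z₂ : Finset (Fin n)} (h : Disjoint z₁ z₂) (y : Finset (Fin n)) :
    (blk S (z₁ ∪ z₂) y).submatrix (unionEquiv h) id = fromRows (blk S z₁ y) (blk S z₂ y) := by
  ext i j; cases i <;> rfl

lemma blk_blocks {z₁ z₂ : Finset (Fin n)} (h : Disjoint z₁ z₂) :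
    (blk S (z₁ ∪ z₂) (z₁ ∪ z₂)).submatrix (unionEquiv h) (unionEquiv h) =
      fromBlocks (blk S z₁ z₁) (blk S z₁ z₂) (blk S z₂ z₁) (blk S z₂ z₂) := by
  ext i j; cases i <;> cases j <;> rfl

lemma blk_conjTranspose (hS : S.IsHermitian) (x y : Finset (Fin n)) :
    (blk S x y)ᴴ = blk S y x := by
  ext i j
  simpa [Matrix.conjTranspose_apply, blk] using congrFun (congrFun hS.eq (i : Fin n)) (j : Fin n)

lemma blk_posDef (hS : S.PosDef) (z : Finset (Fin n)) : (blk S z z).PosDef := by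
  classical
  refine posDef_iff_dotProduct_mulVec.mpr ⟨blk_conjTranspose hS.1 z z, ?_⟩
  intro v hv
  set w : Fin n → ℝ := fun i => if h : i ∈ z then v ⟨i, h⟩ else 0 with hw
  have hvw : ∀ i : ↥z, v i = w i := fun i => by simp [hw, i.2]
  have hwne : w ≠ 0 := by
    obtain ⟨i, hi⟩ := Function.ne_iff.mp hv
    intro hc
    exact hi (by rw [hvw i, hc]; rfl)
  have inner : ∀ i : Fin n, ∑ j ∈ z, S i j * w j = ∑ j, S i j * w j := fun i =>
    Finset.sum_subset (Finset.subset_univ z) (fun j _ hj => by simp [hw, hj])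
  have key : star v ⬝ᵥ (blk S z z) *ᵥ v = star w ⬝ᵥ S *ᵥ w := by
    simp only [dotProduct, Matrix.mulVec, star_trivial, blk, Matrix.of_apply]
    calc ∑ i : ↥z, v i * ∑ j : ↥z, S i j * v j
        = ∑ i : ↥z, w i * ∑ j : ↥z, S (i : Fin n) j * w j := by
          simp_rw [hvw]
      _ = ∑ i ∈ z, w i * ∑ j ∈ z, S i j * w j := by
          simp only [Finset.univ_eq_attach]
          have hin : ∀ i : Fin n, ∑ j ∈ z.attach, S i (j : Fin n) * w j = ∑ j ∈ z, S i j * w j :=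
            fun i => Finset.sum_attach z (fun j => S i j * w j)
          simp_rw [hin]
          exact Finset.sum_attach z (fun i => w i * ∑ j ∈ z, S i j * w j)
      _ = ∑ i, w i * ∑ j, S i j * w j := by
          simp_rw [inner]
          exact Finset.sum_subset (Finset.subset_univ z) (fun i _ hi => by simp [hw, hi])
  rw [key]
  exact (posDef_iff_dotProduct_mulVec.mp hS).2 hwne

lemma posDef_submatrix_equiv {m l : Type*} [Fintype m] [Fintype l] [DecidableEq m] [DecidableEq l]
    {M : Matrix m m ℝ} (hM : M.PosDef) (e : l ≃ m) : (M.submatrix e e).PosDef := by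
  refine posDef_iff_dotProduct_mulVec.mpr ⟨(isHermitian_submatrix_equiv e).mpr hM.1, fun x hx => ?_⟩
  have hx' : x ∘ e.symm ≠ 0 := fun hc =>
    hx (funext fun i => by simpa using congrFun hc (e i))
  have h := (posDef_iff_dotProduct_mulVec.mp hM).2 hx'
  convert h using 1
  simp only [dotProduct, Matrix.mulVec, star_trivial, Matrix.submatrix_apply, Function.comp_apply]
  refine Fintype.sum_equiv e _ _ fun i => ?_
  simp only [Equiv.symm_apply_apply]
  congr 1
  refine Fintype.sum_equiv e _ _ fun j => ?_
  simp

lemma schur_posDef {m l : Type*} [Fintype m] [Fintype l] [DecidableEq m] [DecidableEq l]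
    {A : Matrix m m ℝ} (B : Matrix m l ℝ) (D : Matrix l l ℝ) (hA : A.PosDef) [Invertible A]
    (h : (fromBlocks A B Bᴴ D).PosDef) : (D - Bᴴ * A⁻¹ * B).PosDef := by
  refine posDef_iff_dotProduct_mulVec.mpr ⟨(Matrix.IsHermitian.fromBlocks₁₁ B D hA.1).mp h.1, fun x hx => ?_⟩
  have hu : (-((A⁻¹ * B) *ᵥ x) ⊕ᵥ x) ≠ 0 := by
    intro hc
    apply hx
    funext j
    simpa using congrFun hc (Sum.inr j)
  have hpos := (posDef_iff_dotProduct_mulVec.mp h).2 hu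
  rw [dotProduct_mulVec, Matrix.schur_complement_eq₁₁ B D _ _ hA.1, neg_add_cancel,
    dotProduct_zero, zero_add] at hpos
  rw [dotProduct_mulVec]
  exact hpos

lemma condCov_posDef (hS : S.PosDef) {y z : Finset (Fin n)} (h : Disjoint z y) :
    (condCov S y y z).PosDef := by
  classical
  have hA : (blk S z z).PosDef := blk_posDef hS z
  letI := hA.isUnit.invertible
  have hM : (fromBlocks (blk S z z) (blk S z y) (blk S y z) (blk S y y)).PosDef := by
    rw [← blk_blocks h]
    exact posDef_submatrix_equiv (blk_posDef hS _) _
  rw [show blk S y z = (blk S z y)ᴴ from (blk_conjTranspose hS.1 z y).symm] at hM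
  have hres := schur_posDef (blk S z y) (blk S y y) hA hM
  rw [blk_conjTranspose hS.1 z y] at hres
  exact hres

lemma condCov_union (hS : S.PosDef) {z₁ z₂ : Finset (Fin n)} (h : Disjoint z₁ z₂)
    (x y : Finset (Fin n)) :
    condCov S x y (z₁ ∪ z₂) =
      condCov S x y z₁ - condCov S x z₂ z₁ * (condCov S z₂ z₂ z₁)⁻¹ * condCov S z₂ y z₁ := by
  classical
  set e := unionEquiv h with he
  have hA : (blk S z₁ z₁).PosDef := blk_posDef hS z₁
  letI := hA.isUnit.invertible
  have hSch : (condCov S z₂ z₂ z₁).PosDef := condCov_posDef hS h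
  letI := hSch.isUnit.invertible
  haveI hInv2 : Invertible (blk S z₂ z₂ - blk S z₂ z₁ * ⅟(blk S z₁ z₁) * blk S z₁ z₂) := by
    rw [invOf_eq_nonsing_inv]
    exact hSch.isUnit.invertible
  haveI := Matrix.fromBlocks₁₁Invertible (blk S z₁ z₁) (blk S z₁ z₂) (blk S z₂ z₁) (blk S z₂ z₂)
  -- rewrite the union blocks as submatrices
  have hXu : blk S (z₁ ∪ z₂) (z₁ ∪ z₂) =
      (fromBlocks (blk S z₁ z₁) (blk S z₁ z₂) (blk S z₂ z₁) (blk S z₂ z₂)).submatrix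
        e.symm e.symm := by
    rw [← blk_blocks h, ← he]
    ext i j
    simp [Matrix.submatrix_apply]
  have hXc : blk S x (z₁ ∪ z₂) =
      (fromCols (blk S x z₁) (blk S x z₂)).submatrix id e.symm := by
    rw [← blk_cols h, ← he]
    ext i j
    simp [Matrix.submatrix_apply]
  have hXr : blk S (z₁ ∪ z₂) y =
      (fromRows (blk S z₁ y) (blk S z₂ y)).submatrix e.symm id := by
    rw [← blk_rows h, ← he]
    ext i j
    simp [Matrix.submatrix_apply]
  have hBinv : (fromBlocks (blk S z₁ z₁) (blk S z₁ z₂) (blk S z₂ z₁) (blk S z₂ z₂))⁻¹ =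
      fromBlocks
        ((blk S z₁ z₁)⁻¹ + (blk S z₁ z₁)⁻¹ * blk S z₁ z₂ * (condCov S z₂ z₂ z₁)⁻¹ *
          blk S z₂ z₁ * (blk S z₁ z₁)⁻¹)
        (-((blk S z₁ z₁)⁻¹ * blk S z₁ z₂ * (condCov S z₂ z₂ z₁)⁻¹))
        (-((condCov S z₂ z₂ z₁)⁻¹ * blk S z₂ z₁ * (blk S z₁ z₁)⁻¹))
        ((condCov S z₂ z₂ z₁)⁻¹) := by
    rw [← invOf_eq_nonsing_inv, Matrix.invOf_fromBlocks₁₁_eq]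
    congr 1 <;> simp only [invOf_eq_nonsing_inv] <;> rfl
  have hprod : blk S x (z₁ ∪ z₂) * (blk S (z₁ ∪ z₂) (z₁ ∪ z₂))⁻¹ * blk S (z₁ ∪ z₂) y =
      fromCols (blk S x z₁) (blk S x z₂) *
        (fromBlocks (blk S z₁ z₁) (blk S z₁ z₂) (blk S z₂ z₁) (blk S z₂ z₂))⁻¹ *
        fromRows (blk S z₁ y) (blk S z₂ y) := by
    rw [hXc, hXu, hXr, Matrix.inv_submatrix_equiv, Matrix.submatrix_mul_equiv,
      Matrix.submatrix_mul_equiv, Matrix.submatrix_id_id]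
  show blk S x y - blk S x (z₁ ∪ z₂) * (blk S (z₁ ∪ z₂) (z₁ ∪ z₂))⁻¹ * blk S (z₁ ∪ z₂) y = _
  rw [hprod, hBinv, Matrix.fromCols_mul_fromBlocks, Matrix.fromCols_mul_fromRows]
  show _ = (blk S x y - blk S x z₁ * (blk S z₁ z₁)⁻¹ * blk S z₁ y) -
    (blk S x z₂ - blk S x z₁ * (blk S z₁ z₁)⁻¹ * blk S z₁ z₂) * (condCov S z₂ z₂ z₁)⁻¹ *
      (blk S z₂ y - blk S z₂ z₁ * (blk S z₁ z₁)⁻¹ * blk S z₁ y)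
  simp only [Matrix.sub_mul, Matrix.mul_sub, Matrix.add_mul, Matrix.mul_add, Matrix.neg_mul,
    Matrix.mul_neg, Matrix.mul_assoc]
  abel

lemma cochran_key {ι₁ ι₂ ι₃ : Type*} [Fintype ι₂] [Fintype ι₃] [DecidableEq ι₂] [DecidableEq ι₃]
    (Aab : Matrix ι₁ ι₂ ℝ) (Aad : Matrix ι₁ ι₃ ℝ) (Abb : Matrix ι₂ ι₂ ℝ)
    (Abd : Matrix ι₂ ι₃ ℝ) (Adb : Matrix ι₃ ι₂ ℝ) (Add : Matrix ι₃ ι₃ ℝ)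
    [Invertible Abb] [Invertible Add]
    [Invertible (Add - Adb * Abb⁻¹ * Abd)] [Invertible (Abb - Abd * Add⁻¹ * Adb)] :
    (Aab - Aad * Add⁻¹ * Adb) * (Abb - Abd * Add⁻¹ * Adb)⁻¹ =
      Aab * Abb⁻¹ - (Aad - Aab * Abb⁻¹ * Abd) * (Add - Adb * Abb⁻¹ * Abd)⁻¹ * (Adb * Abb⁻¹) := by
  have h1 : Adb * Abb⁻¹ * (Abb - Abd * Add⁻¹ * Adb) =
      (Add - Adb * Abb⁻¹ * Abd) * (Add⁻¹ * Adb) := by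
    simp only [Matrix.mul_sub, Matrix.sub_mul, Matrix.mul_assoc,
      Matrix.inv_mul_of_invertible, Matrix.mul_one, Matrix.mul_inv_cancel_left_of_invertible,
      Matrix.inv_mul_cancel_left_of_invertible, mul_one]
  have h2 : (Aab * Abb⁻¹ - (Aad - Aab * Abb⁻¹ * Abd) * (Add - Adb * Abb⁻¹ * Abd)⁻¹ *
      (Adb * Abb⁻¹)) * (Abb - Abd * Add⁻¹ * Adb) = Aab - Aad * Add⁻¹ * Adb := by
    rw [Matrix.sub_mul,
      Matrix.mul_assoc ((Aad - Aab * Abb⁻¹ * Abd) * (Add - Adb * Abb⁻¹ * Abd)⁻¹)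
        (Adb * Abb⁻¹) (Abb - Abd * Add⁻¹ * Adb), h1,
      Matrix.mul_assoc (Aad - Aab * Abb⁻¹ * Abd) ((Add - Adb * Abb⁻¹ * Abd)⁻¹)
        ((Add - Adb * Abb⁻¹ * Abd) * (Add⁻¹ * Adb)),
      Matrix.inv_mul_cancel_left_of_invertible]
    simp only [Matrix.mul_sub, Matrix.sub_mul, Matrix.mul_assoc,
      Matrix.inv_mul_of_invertible, Matrix.mul_one, Matrix.mul_inv_cancel_left_of_invertible,
      Matrix.inv_mul_cancel_left_of_invertible, mul_one]
    abel
  calc (Aab - Aad * Add⁻¹ * Adb) * (Abb - Abd * Add⁻¹ * Adb)⁻¹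
      = (Aab * Abb⁻¹ - (Aad - Aab * Abb⁻¹ * Abd) * (Add - Adb * Abb⁻¹ * Abd)⁻¹ * (Adb * Abb⁻¹)) *
          (Abb - Abd * Add⁻¹ * Adb) * (Abb - Abd * Add⁻¹ * Adb)⁻¹ := by rw [h2]
    _ = _ := Matrix.mul_inv_cancel_right_of_invertible _ _

theorem cochran_recursion (S : Matrix (Fin n) (Fin n) ℝ) (hS : S.PosDef)
    (a b c d : Finset (Fin n))
    (hab : Disjoint a b) (hac : Disjoint a c) (had : Disjoint a d)
    (hbc : Disjoint b c) (hbd : Disjoint b d) (hcd : Disjoint c d) :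
    regCoef S a b (c ∪ d) =
      regCoef S a b c - regCoef S a d (b ∪ c) * regCoef S d b c := by
  classical
  have hbbc : (condCov S b b c).PosDef := condCov_posDef hS hbc.symm
  have hddc : (condCov S d d c).PosDef := condCov_posDef hS hcd
  letI := hbbc.isUnit.invertible
  letI := hddc.isUnit.invertible
  have hQpd : (condCov S b b (c ∪ d)).PosDef :=
    condCov_posDef hS (Finset.disjoint_union_left.mpr ⟨hbc.symm, hbd.symm⟩)
  have hPpd : (condCov S d d (c ∪ b)).PosDef :=
    condCov_posDef hS (Finset.disjoint_union_left.mpr ⟨hcd, hbd⟩)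
  haveI hQinv : Invertible (condCov S b b c -
      condCov S b d c * (condCov S d d c)⁻¹ * condCov S d b c) := by
    rw [← condCov_union hS hcd b b]
    exact hQpd.isUnit.invertible
  haveI hPinv : Invertible (condCov S d d c -
      condCov S d b c * (condCov S b b c)⁻¹ * condCov S b d c) := by
    rw [← condCov_union hS hbc.symm d d]
    exact hPpd.isUnit.invertible
  unfold regCoef
  rw [Finset.union_comm b c, condCov_union hS hcd a b, condCov_union hS hcd b b,
    condCov_union hS hbc.symm a d, condCov_union hS hbc.symm d d]
  exact cochran_key (condCov S a b c) (condCov S a d c) (condCov S b b c)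
    (condCov S b d c) (condCov S d b c) (condCov S d d c)
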